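/- Let F be a finitely generated free group, let φ : F → F be a group endomorphism, and let H be a finite-index subgroup of F that is invariant under φ (i.e., φ(H) ⊆ H). Then every nonzero eigenvalue of φ is a nonzero eigenvalue of the restriction φ|_H; that is, Λ(φ) ⊆ Λ(φ|_H). -/

import Mathlib

open scoped TensorProduct

/-- The complex linear endomorphism of `(G/[G,G]) ⊗_ℤ ℂ` induced by a group
endomorphism `φ : G →* G`. -/
noncomputable def inducedEnd {G : Type*} [Group G] (φ : G →* G) :
    Module.End ℂ (ℂ ⊗[ℤ] Additive (Abelianization G)) :=
  ((MonoidHom.toAdditive (Abelianization.map φ)).toIntLinearMap).baseChange ℂ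

/-- `Λ(φ)`: the set of nonzero eigenvalues of the induced map on
`(G/[G,G]) ⊗_ℤ ℂ`. -/
noncomputable def specNZ {G : Type*} [Group G] (φ : G →* G) : Set ℂ :=
  {μ : ℂ | μ ≠ 0 ∧ Module.End.HasEigenvalue (inducedEnd φ) μ}

/-- The restriction of an endomorphism `φ` to a `φ`-invariant subgroup `H`,
as an endomorphism of `H`. -/
def restrictHom {G : Type*} [Group G] (φ : G →* G) (H : Subgroup G)
    (hinv : ∀ x ∈ H, φ x ∈ H) : H →* H :=
  (φ.domRestrict H).codRestrict H fun x => hinv x x.2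

/-- The base-changed linear map induced by a group homomorphism. -/
noncomputable def cmap {G G' : Type*} [Group G] [Group G'] (f : G →* G') :
    (ℂ ⊗[ℤ] Additive (Abelianization G)) →ₗ[ℂ] (ℂ ⊗[ℤ] Additive (Abelianization G')) :=
  ((MonoidHom.toAdditive (Abelianization.map f)).toIntLinearMap).baseChange ℂ

lemma cmap_comm {G G' : Type*} [Group G] [Group G'] (f : G →* G')
    (ψ : G →* G) (φ : G' →* G') (h : φ.comp f = f.comp ψ) :
    (inducedEnd φ) ∘ₗ cmap f = cmap f ∘ₗ (inducedEnd ψ) := by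
  unfold inducedEnd cmap
  rw [← LinearMap.baseChange_comp, ← LinearMap.baseChange_comp]
  congr 1
  ext x
  obtain ⟨y, rfl⟩ : ∃ y, Additive.ofMul (Abelianization.of y) = x :=
    QuotientGroup.mk'_surjective _ _
  show Additive.ofMul (Abelianization.map φ (Abelianization.map f (Abelianization.of y))) =
    Additive.ofMul (Abelianization.map f (Abelianization.map ψ (Abelianization.of y)))
  simp only [Abelianization.map_of]
  rw [show φ (f y) = f (ψ y) from DFunLike.congr_fun h y]

lemma cmap_subtype_surjective {G : Type*} [Group G] (H : Subgroup G) [H.FiniteIndex] :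
    Function.Surjective (cmap H.subtype) := by
  rw [← LinearMap.range_eq_top, eq_top_iff]
  rintro v -
  induction v using TensorProduct.induction_on with
  | zero => exact Submodule.zero_mem _
  | add a b ha hb => exact Submodule.add_mem _ ha hb
  | tmul c m =>
    obtain ⟨x, rfl⟩ : ∃ x, Additive.ofMul (Abelianization.of x) = m :=
      QuotientGroup.mk'_surjective _ _
    obtain ⟨n, hn, -, hmem⟩ :=
      H.exists_pow_mem_of_index_ne_zero Subgroup.FiniteIndex.index_ne_zero x
    refine ⟨(c / (n : ℂ)) ⊗ₜ Additive.ofMul (Abelianization.of (⟨x ^ n, hmem⟩ : H)), ?_⟩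
    have h1 : cmap H.subtype ((c / (n : ℂ)) ⊗ₜ
        Additive.ofMul (Abelianization.of (⟨x ^ n, hmem⟩ : H))) =
        (c / (n : ℂ)) ⊗ₜ Additive.ofMul (Abelianization.of (x ^ n)) := rfl
    rw [h1]
    have h2 : Additive.ofMul (Abelianization.of (x ^ n)) =
        (n : ℤ) • Additive.ofMul (Abelianization.of x) := by
      rw [map_pow]
      rw [show ((n : ℤ) • Additive.ofMul (Abelianization.of x)) =
        Additive.ofMul ((Abelianization.of x) ^ (n : ℤ)) from rfl]
      norm_num
    rw [h2, TensorProduct.tmul_smul, TensorProduct.smul_tmul', zsmul_eq_mul]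
    have hn' : (n : ℂ) ≠ 0 := Nat.cast_ne_zero.mpr hn.ne'
    congr 1
    push_cast
    field_simp

theorem eigenvalues_subset_of_finiteIndex_invariant
    {F : Type*} [Group F] [IsFreeGroup F] [Group.FG F]
    (φ : F →* F) (H : Subgroup F) [H.FiniteIndex]
    (hinv : ∀ x ∈ H, φ x ∈ H) :
    specNZ φ ⊆ specNZ (restrictHom φ H hinv) := by
  rintro μ ⟨hμ0, hμ⟩
  refine ⟨hμ0, ?_⟩
  set ψ := restrictHom φ H hinv with hψ
  -- finite generation / finite dimensionality
  haveI : Group.FG H := H.fg_of_index_ne_zero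
  haveI hFGF : Group.FG (Abelianization F) :=
    inferInstanceAs (Group.FG (F ⧸ commutator F))
  haveI hFGH : Group.FG (Abelianization H) :=
    inferInstanceAs (Group.FG (H ⧸ commutator H))
  haveI : Module.Finite ℤ (Additive (Abelianization F)) :=
    Module.Finite.iff_addGroup_fg.mpr inferInstance
  haveI : Module.Finite ℤ (Additive (Abelianization H)) :=
    Module.Finite.iff_addGroup_fg.mpr inferInstance
  haveI : Module.Finite ℂ (ℂ ⊗[ℤ] Additive (Abelianization F)) :=
    inferInstance
  haveI : Module.Finite ℂ (ℂ ⊗[ℤ] Additive (Abelianization H)) :=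
    inferInstance
  by_contra hB
  -- B - μ is injective, hence surjective
  have hBinj : Function.Injective (inducedEnd ψ - μ • (1 : Module.End ℂ (ℂ ⊗[ℤ] Additive (Abelianization ↥H)))) := by
    rw [← LinearMap.ker_eq_bot, ← Module.End.eigenspace_def]
    exact not_not.mp hB
  have hBsurj : Function.Surjective (inducedEnd ψ - μ • (1 : Module.End ℂ (ℂ ⊗[ℤ] Additive (Abelianization ↥H)))) :=
    (LinearMap.injective_iff_surjective).mp hBinj
  -- commutation of cmap with the endomorphisms
  have hcomm : (inducedEnd φ) ∘ₗ cmap H.subtype = cmap H.subtype ∘ₗ (inducedEnd ψ) := by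
    refine cmap_comm H.subtype ψ φ ?_
    ext x
    rfl
  have hιsurj := cmap_subtype_surjective H
  -- A - μ is surjective
  have hAsurj : Function.Surjective (inducedEnd φ - μ • (1 : Module.End ℂ (ℂ ⊗[ℤ] Additive (Abelianization F)))) := by
    intro v
    obtain ⟨w, rfl⟩ := hιsurj v
    obtain ⟨u, hu⟩ := hBsurj w
    refine ⟨cmap H.subtype u, ?_⟩
    have hc := DFunLike.congr_fun hcomm u
    simp only [LinearMap.comp_apply] at hc
    simp only [LinearMap.sub_apply, LinearMap.smul_apply, Module.End.one_apply] at hu ⊢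
    rw [hc, ← hu, map_sub, map_smul]
  have hAinj : Function.Injective (inducedEnd φ - μ • (1 : Module.End ℂ (ℂ ⊗[ℤ] Additive (Abelianization F)))) :=
    (LinearMap.injective_iff_surjective).mpr hAsurj
  -- contradiction with μ being an eigenvalue of A
  have : Module.End.eigenspace (inducedEnd φ) μ = ⊥ := by
    rw [Module.End.eigenspace_def, LinearMap.ker_eq_bot]
    exact hAinj
  exact hμ this
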